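/- Product formula: for f_1,...,f_k, g_1,...,g_h ∈ A_R(m), with α ∈ ℕ^k, β ∈ ℕ^h, ∑α_i ≤ n, ∑β_j ≤ n, one has e_α(f)·e_β(g) = ∑_γ e_γ(f, g, fg), where fg = (f_i g_j)_{i,j}, and γ = (γ_{i0}, γ_{0j}, γ_{ij}) ranges over tuples of naturals with |γ| ≤ n, ∑_{j=0}^h γ_{ij} = α_i for each i, and ∑_{i=0}^k γ_{ij} = β_j for each j. -/

import Mathlib

open MvPolynomial Finset
open scoped Classical

noncomputable section

variable {R : Type*} [CommRing R]

/-- f(j): substitution y_i ↦ x_i(j). -/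
def subst (m n : ℕ) (f : MvPolynomial (Fin m) R) (j : Fin n) :
    MvPolynomial (Fin m × Fin n) R :=
  rename (fun i => (i, j)) f

/-- the action of σ ∈ Sₙ on A_R(n,m). -/
def permRename (m n : ℕ) (σ : Equiv.Perm (Fin n)) :
    MvPolynomial (Fin m × Fin n) R →ₐ[R] MvPolynomial (Fin m × Fin n) R :=
  rename (fun q => (q.1, σ q.2))

/-- invariant submodule A_R(n,m)^{Sₙ}. -/
def invSub (R : Type*) [CommRing R] (m n : ℕ) :
    Submodule R (MvPolynomial (Fin m × Fin n) R) where
  carrier := {p | ∀ σ : Equiv.Perm (Fin n), permRename m n σ p = p}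
  add_mem' := fun ha hb σ => by simp [map_add, ha σ, hb σ]
  zero_mem' := fun σ => by simp
  smul_mem' := fun c p hp σ => by simp [map_smul, hp σ]

/-- invariant subalgebra A_R(n,m)^{Sₙ}. -/
def invAlg (R : Type*) [CommRing R] (m n : ℕ) :
    Subalgebra R (MvPolynomial (Fin m × Fin n) R) where
  carrier := {p | ∀ σ : Equiv.Perm (Fin n), permRename m n σ p = p}
  add_mem' := fun ha hb σ => by simp [map_add, ha σ, hb σ]
  mul_mem' := fun ha hb σ => by simp [map_mul, ha σ, hb σ]
  algebraMap_mem' := fun r σ => by simp [permRename]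

/-- e_α(f): coefficient of t^α in ∏ᵢ (1 + ∑ₕ tₕ fₕ(i)). -/
def eAlpha (m n : ℕ) {ι : Type*} [Fintype ι] (f : ι → MvPolynomial (Fin m) R) (α : ι → ℕ) :
    MvPolynomial (Fin m × Fin n) R :=
  coeff (Finsupp.equivFunOnFinite.symm α)
    (∏ i : Fin n, (1 + ∑ h : ι, X h * C (subst m n (f h) i)))

/-- k-th elementary symmetric polynomial evaluated at v(1),…,v(n). -/
def esymVal {S : Type*} [CommRing S] (n : ℕ) (v : Fin n → S) (k : ℕ) : S :=
  ∑ A ∈ Finset.powersetCard k (Finset.univ : Finset (Fin n)), ∏ j ∈ A, v j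

/-- multidegree of a monomial exponent. -/
def wdeg (m n : ℕ) (d : Fin m × Fin n →₀ ℕ) : Fin m → ℕ := fun i => ∑ j : Fin n, d (i, j)

/-- multidegree-a component of A_R(n,m). -/
def comp (R : Type*) [CommRing R] (m n : ℕ) (a : Fin m → ℕ) :
    Submodule R (MvPolynomial (Fin m × Fin n) R) where
  carrier := {p | ∀ d ∈ p.support, wdeg m n d = a}
  add_mem' := fun ha hb d hd => by
    rcases Finset.mem_union.1 (MvPolynomial.support_add hd) with h | h
    · exact ha d h
    · exact hb d h
  zero_mem' := fun d hd => by simp at hd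
  smul_mem' := fun c p hp d hd => hp d (MvPolynomial.support_smul hd)

/-- the restriction map πₙ₊₁ : A_R(n+1,m) → A_R(n,m), x_i(n+1) ↦ 0. -/
def projDown (R : Type*) [CommRing R] (m n : ℕ) :
    MvPolynomial (Fin m × Fin (n+1)) R →ₐ[R] MvPolynomial (Fin m × Fin n) R :=
  aeval (fun p : Fin m × Fin (n+1) =>
    if h : (p.2 : ℕ) < n then X (p.1, ⟨p.2, h⟩) else 0)

/-- e_α for finitely supported α : M_m⁺ → ℕ. -/
def eAlphaM (R : Type*) [CommRing R] (m n : ℕ) (α : {d : Fin m →₀ ℕ // d ≠ 0} →₀ ℕ) :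
    MvPolynomial (Fin m × Fin n) R :=
  eAlpha m n (fun l => monomial ((α.support.equivFin.symm l) : {d : Fin m →₀ ℕ // d ≠ 0}).1 (1 : R))
    (fun l => α (α.support.equivFin.symm l))

/-- a monomial of positive degree is primitive if it is not a proper power. -/
def Primitive (m : ℕ) (d : Fin m →₀ ℕ) : Prop :=
  d ≠ 0 ∧ ∀ (e : Fin m →₀ ℕ) (k : ℕ), 2 ≤ k → d ≠ k • e


set_option maxHeartbeats 1000000

section AUX
variable {S : Type*} [CommRing S]
lemma prod_monomial_one {ι τ : Type*} (s : Finset ι) (d : ι → (τ →₀ ℕ)) :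
    (∏ x ∈ s, (monomial (d x) (1:S))) = monomial (∑ x ∈ s, d x) 1 := by
  classical
  induction s using Finset.induction_on with
  | empty => simp
  | insert _ _ hx ih =>
      rw [Finset.prod_insert hx, Finset.sum_insert hx, ih, monomial_mul, mul_one]

lemma aeval_monomial_monomials {σ τ : Type*} [Fintype σ] (w : σ → (τ →₀ ℕ)) (c : σ →₀ ℕ)
    (r : S) :
    aeval (fun x => (monomial (w x) (1:S) : MvPolynomial τ S)) (monomial c r)
      = monomial (∑ x : σ, c x • w x) r := by
  rw [aeval_monomial, Finsupp.prod_fintype]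
  · simp only [monomial_pow, one_pow]
    rw [prod_monomial_one]
    rw [algebraMap_eq, C_mul_monomial, mul_one]
  · intro i; simp

lemma coeff_aeval_monomials {σ τ : Type*} [Fintype σ] (w : σ → (τ →₀ ℕ))
    (Q : MvPolynomial σ S) (δ : τ →₀ ℕ) :
    coeff δ (aeval (fun x => (monomial (w x) (1:S) : MvPolynomial τ S)) Q)
      = ∑ c ∈ Q.support.filter (fun c => (∑ x : σ, c x • w x) = δ), coeff c Q := by
  conv_lhs => rw [Q.as_sum, map_sum]
  rw [Finset.sum_filter, coeff_sum]
  simp only [aeval_monomial_monomials, coeff_monomial]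

lemma coeff_mul_rename_inl_inr {σ τ : Type*} (p : MvPolynomial σ S) (q : MvPolynomial τ S)
    (u : σ →₀ ℕ) (v : τ →₀ ℕ) :
    coeff (u.mapDomain Sum.inl + v.mapDomain Sum.inr)
        (rename Sum.inl p * rename (Sum.inr : τ → σ ⊕ τ) q) = coeff u p * coeff v q := by
  rw [coeff_mul, Finset.sum_eq_single_of_mem (u.mapDomain Sum.inl, v.mapDomain Sum.inr)
      (Finset.HasAntidiagonal.mem_antidiagonal.2 rfl) ?h0,
    coeff_rename_mapDomain _ Sum.inl_injective, coeff_rename_mapDomain _ Sum.inr_injective]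
  case h0 =>
    rintro ⟨a, b⟩ hab hne
    by_contra hz
    have ha : coeff a (rename Sum.inl p) ≠ 0 := fun hh => hz (by simp [hh])
    have hb : coeff b (rename (Sum.inr : τ → σ ⊕ τ) q) ≠ 0 := fun hh => hz (by simp [hh])
    obtain ⟨u', hu', -⟩ := coeff_rename_ne_zero _ _ _ ha
    obtain ⟨v', hv', -⟩ := coeff_rename_ne_zero _ _ _ hb
    rw [Finset.HasAntidiagonal.mem_antidiagonal] at hab
    subst hu' hv'
    apply hne
    have h1 : u' = u := by
      ext x
      have := congrArg (fun F : σ ⊕ τ →₀ ℕ => F (Sum.inl x)) hab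
      simpa [Finsupp.mapDomain_apply Sum.inl_injective,
        Finsupp.mapDomain_notin_range _ _ (by simp : Sum.inl x ∉ Set.range (Sum.inr : τ → σ ⊕ τ))]
        using this
    have h2 : v' = v := by
      ext x
      have := congrArg (fun F : σ ⊕ τ →₀ ℕ => F (Sum.inr x)) hab
      simpa [Finsupp.mapDomain_apply Sum.inr_injective,
        Finsupp.mapDomain_notin_range _ _ (by simp : Sum.inr x ∉ Set.range (Sum.inl : σ → σ ⊕ τ))]
        using this
    rw [h1, h2]

lemma totalDegree_one_add_sum {ι : Type*} [Fintype ι] (v : ι → S) :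
    (1 + ∑ x : ι, X x * C (v x) : MvPolynomial ι S).totalDegree ≤ 1 := by
  refine le_trans (totalDegree_add _ _) ?_
  simp only [totalDegree_one, Nat.max_le, Nat.zero_le, true_and]
  refine le_trans (totalDegree_finset_sum _ _) ?_
  refine Finset.sup_le fun x _ => le_trans (totalDegree_mul _ _) ?_
  rw [totalDegree_C, add_zero]
  refine le_of_le_of_eq (totalDegree_monomial_le (Finsupp.single x 1) (1:S)) ?_
  simp [Finsupp.sum_single_index]
end AUX

/-- product formula: e_α(f)·e_β(g) = ∑_γ e_γ(f,g,fg), where γ ranges over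
tuples (γ_{i0},γ_{0j},γ_{ij}) with |γ| ≤ n, ∑_{j=0}^h γ_{ij} = α_i and
∑_{i=0}^k γ_{ij} = β_j. -/
theorem stmt9 (R : Type*) [CommRing R] (m n k h : ℕ)
    (f : Fin k → MvPolynomial (Fin m) R) (g : Fin h → MvPolynomial (Fin m) R)
    (α : Fin k → ℕ) (β : Fin h → ℕ) (hα : ∑ i, α i ≤ n) (hβ : ∑ j, β j ≤ n) :
    eAlpha m n f α * eAlpha m n g β =
      ∑ γ ∈ (Fintype.piFinset fun _ : Fin k ⊕ Fin h ⊕ Fin k × Fin h =>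
            Finset.range (n + 1)).filter
          (fun γ : Fin k ⊕ Fin h ⊕ Fin k × Fin h → ℕ =>
            (∑ x, γ x) ≤ n ∧
            (∀ i : Fin k, γ (Sum.inl i) + ∑ j : Fin h, γ (Sum.inr (Sum.inr (i, j))) = α i) ∧
            (∀ j : Fin h, γ (Sum.inr (Sum.inl j)) + ∑ i : Fin k, γ (Sum.inr (Sum.inr (i, j))) = β j)),
        eAlpha m n (Sum.elim f (Sum.elim g fun p => f p.1 * g p.2)) γ := by
  set F := Sum.elim f (Sum.elim g fun p : Fin k × Fin h => f p.1 * g p.2) with hF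
  set Q : MvPolynomial (Fin k ⊕ Fin h ⊕ Fin k × Fin h) (MvPolynomial (Fin m × Fin n) R) :=
    ∏ i : Fin n, (1 + ∑ x : (Fin k ⊕ Fin h ⊕ Fin k × Fin h), X x * C (subst m n (F x) i)) with hQ
  set Pf : MvPolynomial (Fin k) (MvPolynomial (Fin m × Fin n) R) :=
    ∏ i : Fin n, (1 + ∑ a : Fin k, X a * C (subst m n (f a) i)) with hPf
  set Pg : MvPolynomial (Fin h) (MvPolynomial (Fin m × Fin n) R) :=
    ∏ i : Fin n, (1 + ∑ b : Fin h, X b * C (subst m n (g b) i)) with hPg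
  set w : (Fin k ⊕ Fin h ⊕ Fin k × Fin h) → ((Fin k ⊕ Fin h) →₀ ℕ) := Sum.elim (fun i => Finsupp.single (Sum.inl i) 1)
    (Sum.elim (fun j => Finsupp.single (Sum.inr j) 1)
      (fun p => Finsupp.single (Sum.inl p.1) 1 + Finsupp.single (Sum.inr p.2) 1)) with hw
  set U : Fin k →₀ ℕ := Finsupp.equivFunOnFinite.symm α with hU
  set V : Fin h →₀ ℕ := Finsupp.equivFunOnFinite.symm β with hV
  set δ : (Fin k ⊕ Fin h) →₀ ℕ := U.mapDomain Sum.inl + V.mapDomain Sum.inr with hδ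
  -- Step A : substitution identity
  have stepA : aeval (fun x => (monomial (w x) (1:MvPolynomial (Fin m × Fin n) R) : MvPolynomial (Fin k ⊕ Fin h) (MvPolynomial (Fin m × Fin n) R))) Q
      = rename Sum.inl Pf * rename (Sum.inr : Fin h → (Fin k ⊕ Fin h)) Pg := by
    rw [hQ, hPf, hPg, map_prod, map_prod, map_prod, ← Finset.prod_mul_distrib]
    refine Finset.prod_congr rfl fun i _ => ?_
    have cross : ∑ p : Fin k × Fin h,
        (X (Sum.inl p.1) * X (Sum.inr p.2) : MvPolynomial (Fin k ⊕ Fin h) (MvPolynomial (Fin m × Fin n) R))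
          * C (subst m n (F (Sum.inr (Sum.inr p))) i)
        = (∑ a, (X (Sum.inl a) : MvPolynomial (Fin k ⊕ Fin h) (MvPolynomial (Fin m × Fin n) R)) * C (subst m n (f a) i))
          * (∑ b, (X (Sum.inr b) : MvPolynomial (Fin k ⊕ Fin h) (MvPolynomial (Fin m × Fin n) R)) * C (subst m n (g b) i)) := by
      rw [Finset.sum_mul_sum, Fintype.sum_prod_type]
      refine Finset.sum_congr rfl fun a _ => Finset.sum_congr rfl fun b _ => ?_
      simp only [hF, Sum.elim_inr, Sum.elim_inl, subst, map_mul]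
      ring
    simp only [map_add, map_one, map_sum, map_mul, aeval_X, aeval_C, rename_X, rename_C,
      algebraMap_eq, Fintype.sum_sum_type]
    simp only [hw, Sum.elim_inl, Sum.elim_inr]
    have hmon1 : ∀ y : (Fin k ⊕ Fin h), (monomial (Finsupp.single y 1) (1:MvPolynomial (Fin m × Fin n) R) : MvPolynomial (Fin k ⊕ Fin h) (MvPolynomial (Fin m × Fin n) R)) = X y :=
      fun y => rfl
    have hmon2 : ∀ p : Fin k × Fin h,
        (monomial (Finsupp.single (Sum.inl p.1 : (Fin k ⊕ Fin h)) 1 + Finsupp.single (Sum.inr p.2) 1) (1:MvPolynomial (Fin m × Fin n) R)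
          : MvPolynomial (Fin k ⊕ Fin h) (MvPolynomial (Fin m × Fin n) R)) = X (Sum.inl p.1) * X (Sum.inr p.2) := by
      intro p; rw [X, X, monomial_mul, mul_one]
    simp only [hmon1, hmon2]
    rw [cross]
    simp only [hF, Sum.elim_inl, Sum.elim_inr]
    ring
  -- Step B : coefficient of product of renames
  have stepB : eAlpha m n f α * eAlpha m n g β
      = coeff δ (rename Sum.inl Pf * rename (Sum.inr : Fin h → Fin k ⊕ Fin h) Pg) := by
    rw [hδ, hU, hV, coeff_mul_rename_inl_inr]
    rfl
  -- Step C : coefficient of substituted polynomial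
  have stepC := coeff_aeval_monomials w Q δ
  have hEA : ∀ γ : (Fin k ⊕ Fin h ⊕ Fin k × Fin h) → ℕ,
      eAlpha m n F γ = coeff (Finsupp.equivFunOnFinite.symm γ) Q := fun γ => rfl
  rw [stepB, ← stepA, stepC]
  simp only [hEA]
  -- degree bound
  have hQdeg : Q.totalDegree ≤ n := by
    rw [hQ]
    refine le_trans (totalDegree_finset_prod _ _) ?_
    refine le_trans (Finset.sum_le_sum fun i _ =>
      totalDegree_one_add_sum (fun x => subst m n (F x) i)) ?_
    simp
  have hsupp : ∀ c ∈ Q.support, (∑ x : Fin k ⊕ Fin h ⊕ Fin k × Fin h, c x) ≤ n := by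
    intro c hc
    have h1 := le_totalDegree hc
    rw [Finsupp.sum_fintype _ _ (fun _ => rfl)] at h1
    exact h1.trans hQdeg
  -- computation of the exponent map
  have hTl : ∀ (c : Fin k ⊕ Fin h ⊕ Fin k × Fin h →₀ ℕ) (i : Fin k),
      (∑ x : Fin k ⊕ Fin h ⊕ Fin k × Fin h, c x • w x) (Sum.inl i)
        = c (Sum.inl i) + ∑ j : Fin h, c (Sum.inr (Sum.inr (i, j))) := by
    intro c i
    rw [Finsupp.finset_sum_apply]
    simp [hw, Fintype.sum_sum_type, Fintype.sum_prod_type, Finsupp.single_apply,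
      Finset.sum_ite_eq, Finset.sum_ite_eq']
    rw [Finset.sum_comm]
    simp
  have hTr : ∀ (c : Fin k ⊕ Fin h ⊕ Fin k × Fin h →₀ ℕ) (j : Fin h),
      (∑ x : Fin k ⊕ Fin h ⊕ Fin k × Fin h, c x • w x) (Sum.inr j)
        = c (Sum.inr (Sum.inl j)) + ∑ i : Fin k, c (Sum.inr (Sum.inr (i, j))) := by
    intro c j
    rw [Finsupp.finset_sum_apply]
    simp [hw, Fintype.sum_sum_type, Fintype.sum_prod_type, Finsupp.single_apply,
      Finset.sum_ite_eq, Finset.sum_ite_eq']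
  have hδl : ∀ i : Fin k, δ (Sum.inl i) = α i := by
    intro i
    rw [hδ, Finsupp.add_apply, Finsupp.mapDomain_apply Sum.inl_injective,
      Finsupp.mapDomain_notin_range _ _
        (by simp : (Sum.inl i : Fin k ⊕ Fin h) ∉ Set.range Sum.inr), add_zero, hU]
    simp
  have hδr : ∀ j : Fin h, δ (Sum.inr j) = β j := by
    intro j
    rw [hδ, Finsupp.add_apply, Finsupp.mapDomain_apply Sum.inr_injective,
      Finsupp.mapDomain_notin_range _ _
        (by simp : (Sum.inr j : Fin k ⊕ Fin h) ∉ Set.range Sum.inl), zero_add, hV]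
    simp
  have hTiff : ∀ c : Fin k ⊕ Fin h ⊕ Fin k × Fin h →₀ ℕ,
      ((∑ x : Fin k ⊕ Fin h ⊕ Fin k × Fin h, c x • w x) = δ ↔
        ((∀ i : Fin k, c (Sum.inl i) + ∑ j : Fin h, c (Sum.inr (Sum.inr (i, j))) = α i) ∧
         (∀ j : Fin h, c (Sum.inr (Sum.inl j)) + ∑ i : Fin k, c (Sum.inr (Sum.inr (i, j))) = β j))) := by
    intro c
    rw [Finsupp.ext_iff, Sum.forall]
    exact and_congr
      (forall_congr' fun i => by rw [hTl c i, hδl i])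
      (forall_congr' fun j => by rw [hTr c j, hδr j])
  -- final combinatorial identification
  refine Eq.trans ?_ (Finset.sum_image
    (g := fun γ : (Fin k ⊕ Fin h ⊕ Fin k × Fin h) → ℕ => Finsupp.equivFunOnFinite.symm γ)
    (f := fun c => coeff c Q)
    (fun γ1 _ γ2 _ hh => Finsupp.equivFunOnFinite.symm.injective hh))
  refine Finset.sum_subset ?_ ?_
  · intro c hc
    simp only [Finset.mem_filter] at hc
    obtain ⟨hcs, hcT⟩ := hc
    simp only [Finset.mem_image]
    refine ⟨⇑c, ?_, Finsupp.equivFunOnFinite_symm_coe c⟩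
    simp only [Finset.mem_filter]
    refine ⟨Fintype.mem_piFinset.mpr fun x => Finset.mem_range.mpr ?_, ?_, ?_⟩
    · exact Nat.lt_succ_of_le (le_trans (Finset.single_le_sum (fun _ _ => Nat.zero_le _)
        (Finset.mem_univ x)) (hsupp c hcs))
    · exact hsupp c hcs
    · exact (hTiff c).mp hcT
  · intro c hcE hcA
    simp only [Finset.mem_image] at hcE
    obtain ⟨γ, hγ, rfl⟩ := hcE
    simp only [Finset.mem_filter] at hγ
    obtain ⟨-, -, h1, h2⟩ := hγ
    have hT : (∑ x : Fin k ⊕ Fin h ⊕ Fin k × Fin h,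
        (Finsupp.equivFunOnFinite.symm γ) x • w x) = δ := by
      exact (hTiff _).mpr ⟨fun i => by simpa using h1 i, fun j => by simpa using h2 j⟩
    by_contra hne
    refine hcA ?_
    simp only [Finset.mem_filter]
    exact ⟨MvPolynomial.mem_support_iff.mpr hne, hT⟩


end
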